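/- For any q with q ≠ 1, q^2 ≠ 1, q^3 ≠ 1 and any positive integer n, ∑_{k=0}^{n-1} q^{k+1} [k]_q^2 = (1/3)[n]_q^3 − (1/2)([n]_q^2 − [2n]_q/[2]_q) − (1/3)[3n]_q/[3]_q, where [m]_q = (q^m − 1)/(q − 1). -/
import Mathlib


theorem q_sum_squares (q : ℝ) (hq : q ≠ 1) (hq2 : q ^ 2 ≠ 1) (hq3 : q ^ 3 ≠ 1)
    (n : ℕ) (hn : 0 < n) :
    ∑ k ∈ Finset.range n, q ^ (k + 1) * ((q ^ k - 1) / (q - 1)) ^ 2 =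
      (1 / 3) * ((q ^ n - 1) / (q - 1)) ^ 3
        - (1 / 2) * (((q ^ n - 1) / (q - 1)) ^ 2 -
            ((q ^ (2 * n) - 1) / (q - 1)) / (1 + q))
        - (1 / 3) * (((q ^ (3 * n) - 1) / (q - 1)) / (1 + q + q ^ 2)) := by
  have h1 : q - 1 ≠ 0 := sub_ne_zero.mpr hq
  have h2 : 1 + q ≠ 0 := fun h => hq2 (by nlinarith [sq_nonneg q])
  have h3 : 1 + q + q ^ 2 ≠ 0 := fun h => hq3 (by nlinarith)
  induction n with
  | zero => simp
  | succ n ih =>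
    rcases Nat.eq_zero_or_pos n with rfl | hn'
    · simp
      field_simp
      ring
    · rw [Finset.sum_range_succ, ih hn']
      have e2 : q ^ (2 * (n + 1)) = q ^ (2 * n) * q ^ 2 := by ring
      have e3 : q ^ (3 * (n + 1)) = q ^ (3 * n) * q ^ 3 := by ring
      rw [e2, e3]
      have e2' : q ^ (2 * n) = (q ^ n) ^ 2 := by rw [pow_mul]; ring
      have e3' : q ^ (3 * n) = (q ^ n) ^ 3 := by rw [pow_mul]; ring
      rw [e2', e3', pow_succ]
      field_simp
      ring
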